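/- Let μ be any Möbius function for 𝒢. If G is a vertex transitive finite simple graph and H is any finite simple graph with |H| < |G| − 1, then μ(H,G) = 0. -/

import Mathlib

open SimpleGraph

/-- A finite simple graph, encoded by its number of vertices together with a
simple graph structure on `Fin n`. -/
def FinGraph : Type := Σ n : ℕ, SimpleGraph (Fin n)

namespace FinGraph

/-- The number of vertices of a graph. -/
def order (G : FinGraph) : ℕ := G.1

/-- Induced containment `H ⊴ G`: there is an injection of the vertices of `H`
into the vertices of `G` which preserves and reflects adjacency (equivalently,
`H` is isomorphic to an induced subgraph of `G`). -/
def Contains (H G : FinGraph) : Prop :=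
  ∃ f : Fin H.1 ↪ Fin G.1, ∀ a b : Fin H.1, G.2.Adj (f a) (f b) ↔ H.2.Adj a b

/-- Isomorphism of finite graphs. -/
def Iso (H G : FinGraph) : Prop := Nonempty (H.2 ≃g G.2)

/-- Package a simple graph on an arbitrary finite vertex type as a `FinGraph`. -/
noncomputable def of {V : Type} [Fintype V] (G : SimpleGraph V) : FinGraph :=
  ⟨Fintype.card V, G.comap ⇑(Fintype.equivFin V).symm⟩

end FinGraph

/-- `T` is a transversal of the interval `[H,G]`: every member lies in `[H,G]`,
distinct members are non-isomorphic, and every graph in `[H,G]` is isomorphic to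
a member of `T`. -/
def IsTransversal (H G : FinGraph) (T : Finset FinGraph) : Prop :=
  (∀ X ∈ T, H.Contains X ∧ X.Contains G) ∧
  (∀ X ∈ T, ∀ Y ∈ T, X ≠ Y → ¬ X.Iso Y) ∧
  (∀ X : FinGraph, H.Contains X → X.Contains G → ∃ Y ∈ T, X.Iso Y)

-- auxiliary lemmas
namespace FinGraph

lemma iso_refl (G : FinGraph) : G.Iso G := ⟨SimpleGraph.Iso.refl⟩
lemma iso_symm {H G : FinGraph} (h : H.Iso G) : G.Iso H := ⟨h.some.symm⟩
lemma iso_trans {H G K : FinGraph} (h : H.Iso G) (h' : G.Iso K) : H.Iso K :=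
  ⟨h.some.trans h'.some⟩

lemma contains_of_iso {H G : FinGraph} (h : H.Iso G) : H.Contains G := by
  obtain ⟨e⟩ := h
  exact ⟨e.toEquiv.toEmbedding, fun a b => e.map_rel_iff⟩

lemma contains_trans {H G K : FinGraph} (h : H.Contains G) (h' : G.Contains K) :
    H.Contains K := by
  obtain ⟨f, hf⟩ := h
  obtain ⟨g, hg⟩ := h'
  exact ⟨f.trans g, fun a b => (hg (f a) (f b)).trans (hf a b)⟩

lemma card_le_of_contains {H G : FinGraph} (h : H.Contains G) : H.1 ≤ G.1 := by
  obtain ⟨f, _⟩ := h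
  simpa using Fintype.card_le_of_embedding f

lemma card_eq_of_iso {H G : FinGraph} (h : H.Iso G) : H.1 = G.1 := by
  obtain ⟨e⟩ := h
  simpa using Fintype.card_congr e.toEquiv

lemma iso_of_contains_card_eq {H G : FinGraph} (h : H.Contains G) (hc : H.1 = G.1) :
    H.Iso G := by
  obtain ⟨f, hf⟩ := h
  have hb : Function.Bijective f := by
    rw [Fintype.bijective_iff_injective_and_card]
    exact ⟨f.injective, by simp [hc]⟩
  exact ⟨⟨Equiv.ofBijective f hb, fun {a b} => hf a b⟩⟩

noncomputable instance isoSetoid : Setoid FinGraph :=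
  ⟨Iso, ⟨iso_refl, iso_symm, iso_trans⟩⟩

lemma exists_transversal (H G : FinGraph) : ∃ T : Finset FinGraph, IsTransversal H G T := by
  letI : DecidablePred (fun X : FinGraph => H.Contains X ∧ X.Contains G) :=
    fun _ => Classical.propDecidable _
  letI : DecidableEq FinGraph := Classical.decEq _
  letI : DecidableEq ((n : ℕ) × SimpleGraph (Fin n)) := Classical.decEq _
  letI : DecidableEq (Quotient isoSetoid) := Classical.decEq _
  set S : Finset FinGraph :=
    ((Finset.range (G.1 + 1)).biUnion fun n =>
      (Finset.univ : Finset (SimpleGraph (Fin n))).image fun g => (⟨n, g⟩ : FinGraph)).filter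
      (fun X => H.Contains X ∧ X.Contains G) with hS
  have hmemS : ∀ X : FinGraph, X ∈ S ↔ H.Contains X ∧ X.Contains G := by
    intro X
    rw [hS]
    refine Finset.mem_filter.trans ?_
    constructor
    · exact fun h => h.2
    · intro h
      refine ⟨Finset.mem_biUnion.2 ⟨X.1, ?_, ?_⟩, h⟩
      · exact Finset.mem_range.2 (Nat.lt_succ_of_le (card_le_of_contains h.2))
      · exact Finset.mem_image.2 ⟨X.2, Finset.mem_univ _, rfl⟩
  refine ⟨(S.image (Quotient.mk isoSetoid)).image Quotient.out, ?_, ?_, ?_⟩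
  · intro X hX
    obtain ⟨q, hq, rfl⟩ := Finset.mem_image.1 hX
    obtain ⟨Z, hZ, rfl⟩ := Finset.mem_image.1 hq
    have hiso : Iso (Quotient.mk isoSetoid Z).out Z := Quotient.mk_out Z
    have hZ' := (hmemS Z).1 hZ
    exact ⟨contains_trans hZ'.1 (contains_of_iso (iso_symm hiso)),
      contains_trans (contains_of_iso hiso) hZ'.2⟩
  · intro X hX Y hY hne hiso
    obtain ⟨q, hq, rfl⟩ := Finset.mem_image.1 hX
    obtain ⟨q', hq', rfl⟩ := Finset.mem_image.1 hY
    apply hne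
    have : q = q' := by
      rw [← Quotient.out_eq q, ← Quotient.out_eq q']
      exact Quotient.sound hiso
    rw [this]
  · intro X h1 h2
    have hXS : X ∈ S := (hmemS X).2 ⟨h1, h2⟩
    refine ⟨(Quotient.mk isoSetoid X).out, ?_, iso_symm (Quotient.mk_out X)⟩
    exact Finset.mem_image.2 ⟨_, Finset.mem_image.2 ⟨X, hXS, rfl⟩, rfl⟩

end FinGraph

/-- `mu` is a Möbius function for the poset `𝒢` of all finite simple graphs up to
isomorphism, ordered by induced containment: it is isomorphism invariant, vanishes
on non-comparable pairs, and for every `H ⊴ G` the sum of `mu H ·` over any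
transversal of `[H,G]` is `1` if `H ≅ G` and `0` otherwise. -/
def IsMobius (mu : FinGraph → FinGraph → ℤ) : Prop :=
  (∀ H H' G G' : FinGraph, H.Iso H' → G.Iso G' → mu H G = mu H' G') ∧
  (∀ H G : FinGraph, ¬ H.Contains G → mu H G = 0) ∧
  (∀ H G : FinGraph, H.Contains G → ∀ T : Finset FinGraph, IsTransversal H G T →
    (H.Iso G → ∑ X ∈ T, mu H X = 1) ∧ (¬ H.Iso G → ∑ X ∈ T, mu H X = 0))

/-- If `G` is vertex transitive then `μ(H,G) = 0` whenever `|H| < |G| - 1`. -/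
theorem mobius_eq_zero_of_vertexTransitive (mu : FinGraph → FinGraph → ℤ)
    (hmu : IsMobius mu) (G : FinGraph)
    (hvt : ∀ u v : Fin G.1, ∃ e : G.2 ≃g G.2, e u = v)
    (H : FinGraph) (hH : H.order + 1 < G.order) :
    mu H G = 0 := by
  obtain ⟨hinv, hnc, hsum⟩ := hmu
  by_cases hHG : H.Contains G
  swap
  · exact hnc H G hHG
  have hpos : 0 < G.1 := by
    have : H.order + 1 < G.order := hH
    simp only [FinGraph.order] at this
    omega
  -- the one-vertex-deleted graph
  set K : FinGraph := ⟨G.1 - 1, G.2.comap (Fin.castLE (Nat.sub_le G.1 1))⟩ with hK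
  have hKcard : K.1 = G.1 - 1 := rfl
  -- key: any X ⊴ G with fewer vertices embeds into K
  have key : ∀ X : FinGraph, X.Contains G → X.1 < G.1 → X.Contains K := by
    intro X ⟨f, hf⟩ hlt
    have hns : ¬ Function.Surjective f := by
      intro hs
      have := Fintype.card_le_of_surjective f hs
      simp at this
      omega
    unfold Function.Surjective at hns
    push_neg at hns
    obtain ⟨v, hv⟩ := hns
    obtain ⟨e, he⟩ := hvt v ⟨G.1 - 1, by omega⟩
    have hval : ∀ a : Fin X.1, (e (f a)).val < G.1 - 1 := by
      intro a
      have h1 : e (f a) ≠ e v := fun h => hv a (e.injective h)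
      rw [he] at h1
      have h2 : (e (f a)).val < G.1 := (e (f a)).isLt
      have h3 : (e (f a)).val ≠ G.1 - 1 := fun h => h1 (Fin.ext h)
      omega
    refine ⟨⟨fun a => ⟨(e (f a)).val, hval a⟩, ?_⟩, ?_⟩
    · intro a b hab
      have : e (f a) = e (f b) := Fin.ext (congrArg Fin.val hab :)
      exact f.injective (e.injective this)
    · intro a b
      have hc : ∀ a : Fin X.1,
          Fin.castLE (Nat.sub_le G.1 1) (⟨(e (f a)).val, hval a⟩ : Fin (G.1 - 1)) = e (f a) :=
        fun a => Fin.ext rfl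
      show G.2.Adj (Fin.castLE (Nat.sub_le G.1 1) ⟨(e (f a)).val, hval a⟩)
        (Fin.castLE (Nat.sub_le G.1 1) ⟨(e (f b)).val, hval b⟩) ↔ X.2.Adj a b
      rw [hc, hc]
      rw [e.map_rel_iff]
      exact hf a b
  have hKG : K.Contains G := by
    refine ⟨⟨Fin.castLE (Nat.sub_le G.1 1), Fin.castLE_injective _⟩, ?_⟩
    intro a b
    exact Iff.rfl
  have hHlt : H.1 < G.1 - 1 := by
    have : H.order + 1 < G.order := hH
    simp only [FinGraph.order] at this
    omega
  have hHK : H.Contains K := key H hHG (by omega)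
  -- transversal of [H,G]
  obtain ⟨T, hT⟩ := FinGraph.exists_transversal H G
  obtain ⟨hT1, hT2, hT3⟩ := hT
  have hHnG : ¬ H.Iso G := by
    intro h
    have := FinGraph.card_eq_of_iso h
    omega
  have hsumT : ∑ X ∈ T, mu H X = 0 :=
    (hsum H G hHG T ⟨hT1, hT2, hT3⟩).2 hHnG
  -- T filtered is a transversal of [H,K]
  classical
  have hT' : IsTransversal H K (T.filter (fun X => X.1 < G.1)) := by
    refine ⟨?_, ?_, ?_⟩
    · intro X hX
      rw [Finset.mem_filter] at hX
      exact ⟨(hT1 X hX.1).1, key X (hT1 X hX.1).2 hX.2⟩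
    · intro X hX Y hY
      rw [Finset.mem_filter] at hX hY
      exact hT2 X hX.1 Y hY.1
    · intro X h1 h2
      obtain ⟨Y, hY, hiso⟩ := hT3 X h1 (FinGraph.contains_trans h2 hKG)
      refine ⟨Y, Finset.mem_filter.2 ⟨hY, ?_⟩, hiso⟩
      have h3 : X.1 ≤ K.1 := FinGraph.card_le_of_contains h2
      have h4 : Y.1 = X.1 := (FinGraph.card_eq_of_iso hiso).symm
      rw [hKcard] at h3
      omega
  have hHnK : ¬ H.Iso K := by
    intro h
    have := FinGraph.card_eq_of_iso h
    rw [hKcard] at this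
    omega
  have hsumT' : ∑ X ∈ T.filter (fun X => X.1 < G.1), mu H X = 0 :=
    (hsum H K hHK _ hT').2 hHnK
  -- the remaining elements are all iso to G; there is exactly one
  obtain ⟨Y, hYT, hYiso⟩ := hT3 G (FinGraph.contains_trans hHG (FinGraph.contains_of_iso (FinGraph.iso_refl G))) (FinGraph.contains_of_iso (FinGraph.iso_refl G))
  have hYcard : Y.1 = G.1 := (FinGraph.card_eq_of_iso hYiso).symm
  have hfilter : T.filter (fun X => ¬ X.1 < G.1) = {Y} := by
    apply Finset.eq_singleton_iff_unique_mem.2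
    refine ⟨Finset.mem_filter.2 ⟨hYT, by omega⟩, ?_⟩
    intro Z hZ
    rw [Finset.mem_filter] at hZ
    have hZle : Z.1 ≤ G.1 := FinGraph.card_le_of_contains (hT1 Z hZ.1).2
    have hZcard : Z.1 = G.1 := by omega
    have hZiso : Z.Iso G := FinGraph.iso_of_contains_card_eq (hT1 Z hZ.1).2 hZcard
    by_contra hne
    exact hT2 Z hZ.1 Y hYT hne (FinGraph.iso_trans hZiso hYiso)
  have hsplit := Finset.sum_filter_add_sum_filter_not T (fun X => X.1 < G.1) (mu H)
  rw [hsumT, hsumT', hfilter, Finset.sum_singleton] at hsplit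
  have : mu H Y = 0 := by omega
  calc mu H G = mu H Y := hinv H H G Y (FinGraph.iso_refl H) hYiso
    _ = 0 := this
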